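/- For any graph G with edge ideal I(G), the second symbolic power satisfies I(G)^{(2)} = I(G)² + I(G)^{2*}, where I(G)^{2*} is the second secant ideal; in particular I(G)^{(2)} is generated by the monomials x_i x_j x_k for triangles {i,j,k} of G together with the monomials x_i x_j x_k x_l for pairs of (not necessarily vertex-disjoint) edges ij, kl of G. -/

import Mathlib

open MvPolynomial

variable (K : Type*) [Field K] [IsAlgClosed K]

/-- The edge ideal of a graph `G` on `[n]`. -/
noncomputable def edgeIdeal (n : ℕ) (G : SimpleGraph (Fin n)) :
    Ideal (MvPolynomial (Fin n) K) :=
  Ideal.span {f | ∃ i j : Fin n, G.Adj i j ∧ f = X i * X j}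

/-- The second secant ideal of an ideal `I ⊆ K[x]`, via the join construction. -/
noncomputable def secantIdeal2 (n : ℕ) (I : Ideal (MvPolynomial (Fin n) K)) :
    Ideal (MvPolynomial (Fin n) K) :=
  Ideal.comap (rename (fun v : Fin n => ((0 : Fin 3), v)) : _ →ₐ[K] _)
    (Ideal.map (rename (fun v : Fin n => ((1 : Fin 3), v)) : _ →ₐ[K] _) I ⊔
     Ideal.map (rename (fun v : Fin n => ((2 : Fin 3), v)) : _ →ₐ[K] _) I ⊔
     Ideal.span {f | ∃ i : Fin n, f = X (0, i) - X (1, i) - X (2, i)})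

/-- The second symbolic power of an ideal: the intersection of the squares of
its minimal primes. -/
noncomputable def symbolicSquare (n : ℕ) (I : Ideal (MvPolynomial (Fin n) K)) :
    Ideal (MvPolynomial (Fin n) K) :=
  ⨅ p ∈ I.minimalPrimes, p ^ 2

section Aux

open scoped Classical

variable {F : Type*} [Field F] {N : ℕ} {G : SimpleGraph (Fin N)}

/-- The retraction killing the variables in `C`. -/
noncomputable def retrAux (C : Set (Fin N)) :
    MvPolynomial (Fin N) F →ₐ[F] MvPolynomial (Fin N) F :=
  aeval (fun v => if v ∈ C then 0 else X v)

lemma retrAux_X (C : Set (Fin N)) (i : Fin N) :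
    retrAux (F := F) C (X i) = if i ∈ C then 0 else X i := by
  simp [retrAux]

lemma sub_retrAux_mem (C : Set (Fin N)) (f : MvPolynomial (Fin N) F) :
    f - retrAux C f ∈ Ideal.span (X '' C : Set (MvPolynomial (Fin N) F)) := by
  induction f using MvPolynomial.induction_on with
  | C a => simp [retrAux]
  | add p q hp hq =>
      have : p + q - retrAux C (p + q) = (p - retrAux C p) + (q - retrAux C q) := by
        rw [map_add]; ring
      rw [this]; exact Ideal.add_mem _ hp hq
  | mul_X p i hp =>
      rcases Classical.em (i ∈ C) with h | h
      · have : p * X i - retrAux C (p * X i) =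
            (p - retrAux C p) * X i + retrAux C p * (X i - retrAux C (X i)) := by
          rw [map_mul]; ring
        rw [this]
        refine Ideal.add_mem _ (Ideal.mul_mem_right _ _ hp) (Ideal.mul_mem_left _ _ ?_)
        rw [retrAux_X, if_pos h, sub_zero]
        exact Ideal.subset_span ⟨i, h, rfl⟩
      · have : p * X i - retrAux C (p * X i) = (p - retrAux C p) * X i := by
          rw [map_mul, retrAux_X, if_neg h]; ring
        rw [this]
        exact Ideal.mul_mem_right _ _ hp

lemma retrAux_eq_zero_of_mem (C : Set (Fin N)) (f : MvPolynomial (Fin N) F)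
    (hf : f ∈ Ideal.span (X '' C : Set (MvPolynomial (Fin N) F))) : retrAux C f = 0 := by
  refine Submodule.span_induction ?_ ?_ ?_ ?_ hf
  · rintro x ⟨i, hi, rfl⟩; rw [retrAux_X, if_pos hi]
  · simp [retrAux]
  · intro x y _ _ hx hy; rw [map_add, hx, hy, add_zero]
  · intro a x _ hx
    rw [smul_eq_mul, map_mul, hx, mul_zero]

lemma mem_span_X_iff_retrAux (C : Set (Fin N)) (f : MvPolynomial (Fin N) F) :
    f ∈ Ideal.span (X '' C : Set (MvPolynomial (Fin N) F)) ↔ retrAux C f = 0 := by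
  constructor
  · exact retrAux_eq_zero_of_mem C f
  · intro h
    have := sub_retrAux_mem C f
    rwa [h, sub_zero] at this

lemma isPrime_span_X (C : Set (Fin N)) :
    (Ideal.span (X '' C : Set (MvPolynomial (Fin N) F))).IsPrime := by
  constructor
  · intro h
    have : (1 : MvPolynomial (Fin N) F) ∈
        Ideal.span (X '' C : Set (MvPolynomial (Fin N) F)) := by rw [h]; trivial
    rw [mem_span_X_iff_retrAux] at this
    simp [retrAux] at this
  · intro f g hfg
    rw [mem_span_X_iff_retrAux, map_mul] at hfg
    rcases mul_eq_zero.mp hfg with h | h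
    · left; rwa [mem_span_X_iff_retrAux]
    · right; rwa [mem_span_X_iff_retrAux]

/-- Vertex covers. -/
def IsCover (G : SimpleGraph (Fin N)) (C : Set (Fin N)) : Prop :=
  ∀ i j, G.Adj i j → i ∈ C ∨ j ∈ C

lemma edgeIdeal_le_span_X {C : Set (Fin N)} (hC : IsCover G C) :
    edgeIdeal F N G ≤ Ideal.span (X '' C : Set (MvPolynomial (Fin N) F)) := by
  rw [edgeIdeal, Ideal.span_le]
  rintro f ⟨i, j, hij, rfl⟩
  rcases hC i j hij with h | h
  · exact Ideal.mul_mem_right _ _ (Ideal.subset_span ⟨i, h, rfl⟩)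
  · exact Ideal.mul_mem_left _ _ (Ideal.subset_span ⟨j, h, rfl⟩)

lemma sq_span_X_eq (C : Set (Fin N)) :
    (Ideal.span (X '' C : Set (MvPolynomial (Fin N) F))) ^ 2 =
      Ideal.span ((fun s => monomial s (1 : F)) ''
        {s | ∃ a ∈ C, ∃ b ∈ C, s = Finsupp.single a 1 + Finsupp.single b 1}) := by
  rw [pow_two, Ideal.span_mul_span']
  congr 1
  ext f
  constructor
  · rintro ⟨x, hx, y, hy, rfl⟩
    obtain ⟨a, ha, rfl⟩ := hx
    obtain ⟨b, hb, rfl⟩ := hy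
    exact ⟨_, ⟨a, ha, b, hb, rfl⟩, by simp [X, monomial_mul]⟩
  · rintro ⟨s, ⟨a, ha, b, hb, rfl⟩, rfl⟩
    exact ⟨X a, ⟨a, ha, rfl⟩, X b, ⟨b, hb, rfl⟩, by simp [X, monomial_mul]⟩

lemma symbolicSquare_le_sq_span_X {C : Set (Fin N)} (hC : IsCover G C) :
    symbolicSquare F N (edgeIdeal F N G) ≤
      (Ideal.span (X '' C : Set (MvPolynomial (Fin N) F))) ^ 2 := by
  haveI : (Ideal.span (X '' C : Set (MvPolynomial (Fin N) F))).IsPrime := isPrime_span_X C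
  obtain ⟨p, hp, hple⟩ := Ideal.exists_minimalPrimes_le (J := Ideal.span (X '' C : Set (MvPolynomial (Fin N) F))) (edgeIdeal_le_span_X hC)
  refine le_trans ?_ (Ideal.pow_right_mono hple 2)
  exact biInf_le _ hp



lemma single_le3 {m : Fin N →₀ ℕ} {i j k : Fin N} (hij : i ≠ j) (hjk : j ≠ k) (hik : i ≠ k)
    (hi : 1 ≤ m i) (hj : 1 ≤ m j) (hk : 1 ≤ m k) :
    Finsupp.single i 1 + Finsupp.single j 1 + Finsupp.single k 1 ≤ m := by
  rw [Finsupp.le_def]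
  intro v
  simp only [Finsupp.coe_add, Pi.add_apply, Finsupp.single_apply]
  split_ifs <;> subst_vars <;> first | contradiction | omega

lemma single_le4 {m : Fin N →₀ ℕ} {i j k l : Fin N} (hij : i ≠ j) (hik : i ≠ k) (hil : i ≠ l)
    (hjk : j ≠ k) (hjl : j ≠ l) (hkl : k ≠ l)
    (hi : 1 ≤ m i) (hj : 1 ≤ m j) (hk : 1 ≤ m k) (hl : 1 ≤ m l) :
    Finsupp.single i 1 + Finsupp.single j 1 + Finsupp.single k 1 + Finsupp.single l 1 ≤ m := by
  rw [Finsupp.le_def]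
  intro v
  simp only [Finsupp.coe_add, Pi.add_apply, Finsupp.single_apply]
  split_ifs <;> subst_vars <;> first | contradiction | omega

lemma single_le4s {m : Fin N →₀ ℕ} {x y v : Fin N} (hxy : x ≠ y) (hxv : x ≠ v) (hyv : y ≠ v)
    (hx : 2 ≤ m x) (hy : 1 ≤ m y) (hv : 1 ≤ m v) :
    Finsupp.single x 1 + Finsupp.single y 1 + Finsupp.single x 1 + Finsupp.single v 1 ≤ m := by
  rw [Finsupp.le_def]
  intro w
  simp only [Finsupp.coe_add, Pi.add_apply, Finsupp.single_apply]
  split_ifs <;> subst_vars <;> first | contradiction | omega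

lemma single_le4xy {m : Fin N →₀ ℕ} {x y : Fin N} (hxy : x ≠ y)
    (hx : 2 ≤ m x) (hy : 2 ≤ m y) :
    Finsupp.single x 1 + Finsupp.single y 1 + Finsupp.single x 1 + Finsupp.single y 1 ≤ m := by
  rw [Finsupp.le_def]
  intro w
  simp only [Finsupp.coe_add, Pi.add_apply, Finsupp.single_apply]
  split_ifs <;> subst_vars <;> first | contradiction | omega

lemma single_add_single_le_fst {m : Fin N →₀ ℕ} {a b : Fin N}
    (h : Finsupp.single a 1 + Finsupp.single b 1 ≤ m) : 1 ≤ m a := by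
  have := Finsupp.le_def.mp h a
  simp only [Finsupp.coe_add, Pi.add_apply, Finsupp.single_apply] at this
  split_ifs at this <;> omega

lemma single_add_single_le_snd {m : Fin N →₀ ℕ} {a b : Fin N}
    (h : Finsupp.single a 1 + Finsupp.single b 1 ≤ m) : 1 ≤ m b := by
  have := Finsupp.le_def.mp h b
  simp only [Finsupp.coe_add, Pi.add_apply, Finsupp.single_apply] at this
  split_ifs at this <;> omega

lemma single_add_single_le_eq {m : Fin N →₀ ℕ} {a : Fin N}
    (h : Finsupp.single a 1 + Finsupp.single a 1 ≤ m) : 2 ≤ m a := by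
  have := Finsupp.le_def.mp h a
  simp only [Finsupp.coe_add, Pi.add_apply, Finsupp.single_apply] at this
  split_ifs at this <;> omega

/-- The combinatorial core. -/
lemma core_lemma (m : Fin N →₀ ℕ)
    (h : ∀ C : Set (Fin N), (∀ i j, G.Adj i j → i ∈ C ∨ j ∈ C) →
      ∃ a ∈ C, ∃ b ∈ C, Finsupp.single a 1 + Finsupp.single b 1 ≤ m) :
    (∃ i j k : Fin N, G.Adj i j ∧ G.Adj j k ∧ G.Adj k i ∧
        Finsupp.single i 1 + Finsupp.single j 1 + Finsupp.single k 1 ≤ m) ∨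
    (∃ i j k l : Fin N, G.Adj i j ∧ G.Adj k l ∧
        Finsupp.single i 1 + Finsupp.single j 1 + Finsupp.single k 1 + Finsupp.single l 1 ≤ m) := by
  by_contra hcon
  push_neg at hcon
  obtain ⟨hT, hP⟩ := hcon
  -- "center" step
  have key : ∀ x : Fin N, m x = 1 →
      (∀ u v, G.Adj u v → 1 ≤ m u → 1 ≤ m v → u = x ∨ v = x) → False := by
    intro x hx hall
    obtain ⟨a, ha, b, hb, hab⟩ := h {v | m v = 0 ∨ v = x} (by
      intro i j hij
      rcases Nat.eq_zero_or_pos (m i) with h0 | h1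
      · exact Or.inl (Or.inl h0)
      rcases Nat.eq_zero_or_pos (m j) with h0 | h1'
      · exact Or.inr (Or.inl h0)
      rcases hall i j hij h1 h1' with rfl | rfl
      · exact Or.inl (Or.inr rfl)
      · exact Or.inr (Or.inr rfl))
    have ha1 : 1 ≤ m a := single_add_single_le_fst hab
    have hb1 : 1 ≤ m b := single_add_single_le_snd hab
    have hax : a = x := ha.resolve_left (by omega)
    have hbx : b = x := hb.resolve_left (by omega)
    subst hax; subst hbx
    have := single_add_single_le_eq hab
    omega
  -- is there an edge inside the support?
  by_cases hS : ∃ a b, G.Adj a b ∧ 1 ≤ m a ∧ 1 ≤ m b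
  · obtain ⟨a, b, hab, hma, hmb⟩ := hS
    have hane : a ≠ b := hab.ne
    -- all support-edges pass through a, or all pass through b
    have hall : (∀ u v, G.Adj u v → 1 ≤ m u → 1 ≤ m v → u = a ∨ v = a) ∨
        (∀ u v, G.Adj u v → 1 ≤ m u → 1 ≤ m v → u = b ∨ v = b) := by
      by_contra hc
      push_neg at hc
      obtain ⟨⟨u1, v1, e1, s1, t1, hu1, hv1⟩, ⟨u2, v2, e2, s2, t2, hu2, hv2⟩⟩ := hc
      -- edge u1v1 avoids a; it must contain b
      have hbc : ∃ c, G.Adj b c ∧ 1 ≤ m c ∧ c ≠ a ∧ c ≠ b := by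
        by_cases hb1 : u1 = b
        · exact ⟨v1, hb1 ▸ e1, t1, hv1, (hb1 ▸ e1).ne'⟩
        by_cases hb2 : v1 = b
        · exact ⟨u1, (hb2 ▸ e1).symm, s1, hu1, (hb2 ▸ e1).ne⟩
        · exact absurd (single_le4 hane (Ne.symm hu1) (Ne.symm hv1) (Ne.symm hb1)
            (Ne.symm hb2) e1.ne hma hmb s1 t1) (hP a b u1 v1 hab e1)
      have had : ∃ d, G.Adj a d ∧ 1 ≤ m d ∧ d ≠ a ∧ d ≠ b := by
        by_cases ha1 : u2 = a
        · exact ⟨v2, ha1 ▸ e2, t2, (ha1 ▸ e2).ne', hv2⟩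
        by_cases ha2 : v2 = a
        · exact ⟨u2, (ha2 ▸ e2).symm, s2, (ha2 ▸ e2).ne, hu2⟩
        · exact absurd (single_le4 hane (Ne.symm ha1) (Ne.symm ha2) (Ne.symm hu2)
            (Ne.symm hv2) e2.ne hma hmb s2 t2) (hP a b u2 v2 hab e2)
      obtain ⟨c, hbc, hmc, hca, hcb⟩ := hbc
      obtain ⟨d, had, hmd, hda, hdb⟩ := had
      by_cases hcd : c = d
      · -- triangle a b c
        subst hcd
        exact hT a b c hab hbc had.symm (single_le3 hane (Ne.symm hcb) (Ne.symm hca) hma hmb hmc)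
      · -- disjoint edges (a,d), (b,c)
        exact hP a d b c had hbc (single_le4 (Ne.symm hda) hane (Ne.symm hca) hdb
          (fun hdc => hcd hdc.symm) (Ne.symm hcb) hma hmd hmb hmc)
    -- finishing argument, symmetric in the two endpoints
    have finish : ∀ x y, G.Adj x y → 1 ≤ m x → 1 ≤ m y →
        (∀ u v, G.Adj u v → 1 ≤ m u → 1 ≤ m v → u = x ∨ v = x) → False := by
      intro x y hxy hmx hmy hallx
      by_cases hx2 : 2 ≤ m x
      · have hy1 : m y = 1 := by
          by_contra hy2
          exact hP x y x y hxy hxy (single_le4xy hxy.ne hx2 (by omega))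
        have hothery : ∀ u v, G.Adj u v → 1 ≤ m u → 1 ≤ m v → u = y ∨ v = y := by
          intro u v huv hu hv
          rcases hallx u v huv hu hv with rfl | rfl
          · right
            by_contra hvy
            exact hP u y u v hxy huv (single_le4s hxy.ne huv.ne (fun h => hvy h.symm)
              hx2 (by omega) hv)
          · left
            by_contra huy
            exact hP v y v u hxy huv.symm (single_le4s hxy.ne huv.ne' (fun h => huy h.symm)
              hx2 (by omega) hu)
        exact key y hy1 hothery
      · exact key x (by omega) hallx
    rcases hall with hA | hB
    · exact finish a b hab hma hmb hA
    · exact finish b a hab.symm hmb hma hB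
  · -- no edge inside the support: the complement of the support is a cover
    push_neg at hS
    obtain ⟨a, ha, b, hb, hab⟩ := h {v | m v = 0} (by
      intro i j hij
      rcases Nat.eq_zero_or_pos (m i) with h0 | h1
      · exact Or.inl h0
      rcases Nat.eq_zero_or_pos (m j) with h0 | h1'
      · exact Or.inr h0
      exact absurd (hS i j hij h1) (by omega))
    have := single_add_single_le_fst hab
    simp only [Set.mem_setOf_eq] at ha
    omega

def triPairExps (G : SimpleGraph (Fin N)) : Set (Fin N →₀ ℕ) :=
  {s | ∃ i j k : Fin N, G.Adj i j ∧ G.Adj j k ∧ G.Adj k i ∧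
      s = Finsupp.single i 1 + Finsupp.single j 1 + Finsupp.single k 1} ∪
  {s | ∃ i j k l : Fin N, G.Adj i j ∧ G.Adj k l ∧
      s = Finsupp.single i 1 + Finsupp.single j 1 + Finsupp.single k 1 + Finsupp.single l 1}

lemma triPair_span_eq :
    Ideal.span ({f | ∃ i j k : Fin N,
          G.Adj i j ∧ G.Adj j k ∧ G.Adj k i ∧ f = X i * X j * X k} ∪
        {f | ∃ i j k l : Fin N,
          G.Adj i j ∧ G.Adj k l ∧ f = X i * X j * X k * X l} :
        Set (MvPolynomial (Fin N) F)) =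
      Ideal.span ((fun s => monomial s (1 : F)) '' triPairExps G) := by
  congr 1
  ext f
  constructor
  · rintro (⟨i, j, k, h1, h2, h3, rfl⟩ | ⟨i, j, k, l, h1, h2, rfl⟩)
    · exact ⟨_, Or.inl ⟨i, j, k, h1, h2, h3, rfl⟩, by simp [X, monomial_mul]⟩
    · exact ⟨_, Or.inr ⟨i, j, k, l, h1, h2, rfl⟩, by simp [X, monomial_mul]⟩
  · rintro ⟨s, hs | hs, rfl⟩
    · obtain ⟨i, j, k, h1, h2, h3, rfl⟩ := hs
      exact Or.inl ⟨i, j, k, h1, h2, h3, by simp [X, monomial_mul]⟩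
    · obtain ⟨i, j, k, l, h1, h2, rfl⟩ := hs
      exact Or.inr ⟨i, j, k, l, h1, h2, by simp [X, monomial_mul]⟩

/-- The hard inclusion: the symbolic square is contained in the monomial span. -/
lemma symbolicSquare_le_triPair :
    symbolicSquare F N (edgeIdeal F N G) ≤
      Ideal.span ((fun s => monomial s (1 : F)) '' triPairExps G) := by
  intro f hf
  rw [mem_ideal_span_monomial_image]
  intro xi hxi
  have hcore := core_lemma (G := G) xi ?_
  · rcases hcore with ⟨i, j, k, h1, h2, h3, hle⟩ | ⟨i, j, k, l, h1, h2, hle⟩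
    · exact ⟨_, Or.inl ⟨i, j, k, h1, h2, h3, rfl⟩, hle⟩
    · exact ⟨_, Or.inr ⟨i, j, k, l, h1, h2, rfl⟩, hle⟩
  · intro C hC
    have hmem := symbolicSquare_le_sq_span_X (G := G) hC hf
    rw [sq_span_X_eq, mem_ideal_span_monomial_image] at hmem
    obtain ⟨s, ⟨a, ha, b, hb, rfl⟩, hle⟩ := hmem xi hxi
    exact ⟨a, ha, b, hb, hle⟩

lemma X_mul_X_mem_edgeIdeal {i j : Fin N} (hij : G.Adj i j) :
    X i * X j ∈ edgeIdeal F N G :=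
  Ideal.subset_span ⟨i, j, hij, rfl⟩

lemma tri_mem_sq_of_two_mem {p : Ideal (MvPolynomial (Fin N) F)} {i j k : Fin N}
    (hi : X i ∈ p) (hj : X j ∈ p) : X i * X j * X k ∈ p ^ 2 := by
  rw [pow_two]
  exact Ideal.mul_mem_right _ _ (Ideal.mul_mem_mul hi hj)

/-- The easy inclusion: the monomial span is contained in the symbolic square. -/
lemma triPair_le_symbolicSquare :
    Ideal.span ({f | ∃ i j k : Fin N,
          G.Adj i j ∧ G.Adj j k ∧ G.Adj k i ∧ f = X i * X j * X k} ∪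
        {f | ∃ i j k l : Fin N,
          G.Adj i j ∧ G.Adj k l ∧ f = X i * X j * X k * X l} :
        Set (MvPolynomial (Fin N) F)) ≤
      symbolicSquare F N (edgeIdeal F N G) := by
  rw [symbolicSquare]
  refine le_iInf₂ fun p hp => ?_
  have hprime : p.IsPrime := hp.1.1
  have hIle : edgeIdeal F N G ≤ p := hp.1.2
  rw [Ideal.span_le]
  rintro f (⟨i, j, k, h1, h2, h3, rfl⟩ | ⟨i, j, k, l, h1, h2, rfl⟩)
  · have d1 := hprime.mem_or_mem (hIle (X_mul_X_mem_edgeIdeal h1))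
    have d2 := hprime.mem_or_mem (hIle (X_mul_X_mem_edgeIdeal h2))
    have d3 := hprime.mem_or_mem (hIle (X_mul_X_mem_edgeIdeal h3))
    have vjk : X j ∈ p → X k ∈ p → X i * X j * X k ∈ p ^ 2 := by
      intro hj hk
      have e : (X i * X j * X k : MvPolynomial (Fin N) F) = X j * X k * X i := by ring
      rw [e]; exact tri_mem_sq_of_two_mem hj hk
    have vki : X k ∈ p → X i ∈ p → X i * X j * X k ∈ p ^ 2 := by
      intro hk hi
      have e : (X i * X j * X k : MvPolynomial (Fin N) F) = X k * X i * X j := by ring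
      rw [e]; exact tri_mem_sq_of_two_mem hk hi
    rcases d1 with h | h <;> rcases d2 with h' | h' <;> rcases d3 with h'' | h'' <;>
      first
        | exact tri_mem_sq_of_two_mem h h'
        | exact vki h' h
        | exact vjk h h''
        | exact tri_mem_sq_of_two_mem h'' h
  · have e : (X i * X j * X k * X l : MvPolynomial (Fin N) F) = (X i * X j) * (X k * X l) := by ring
    rw [e, pow_two]
    exact Ideal.mul_mem_mul (hIle (X_mul_X_mem_edgeIdeal h1))
      (hIle (X_mul_X_mem_edgeIdeal h2))


/-- The specialization map used to push the join ideal into `p ^ 2`. -/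
noncomputable def thetaMap (p : Ideal (MvPolynomial (Fin N) F)) :
    MvPolynomial (Fin 3 × Fin N) F →ₐ[F] MvPolynomial (Fin N) F :=
  aeval (fun q : Fin 3 × Fin N =>
    if q.1 = 0 then X q.2
    else if q.1 = 1 then (if X q.2 ∈ p then 0 else X q.2)
    else (if X q.2 ∈ p then X q.2 else 0))

lemma thetaMap_X0 (p : Ideal (MvPolynomial (Fin N) F)) (v : Fin N) :
    thetaMap p (X ((0 : Fin 3), v)) = X v := by
  rw [thetaMap, aeval_X]; exact if_pos rfl

lemma thetaMap_X1 (p : Ideal (MvPolynomial (Fin N) F)) (v : Fin N) :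
    thetaMap p (X ((1 : Fin 3), v)) = if X v ∈ p then 0 else X v := by
  rw [thetaMap, aeval_X]
  norm_num

lemma thetaMap_X2 (p : Ideal (MvPolynomial (Fin N) F)) (v : Fin N) :
    thetaMap p (X ((2 : Fin 3), v)) = if X v ∈ p then X v else 0 := by
  rw [thetaMap, aeval_X]
  norm_num [Fin.ext_iff]

lemma secant_le_sq_prime {p : Ideal (MvPolynomial (Fin N) F)} (hprime : p.IsPrime)
    (hIle : edgeIdeal F N G ≤ p) :
    secantIdeal2 F N (edgeIdeal F N G) ≤ p ^ 2 := by
  intro f hf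
  rw [secantIdeal2, Ideal.mem_comap] at hf
  have hfeq : thetaMap p (rename (fun v : Fin N => ((0 : Fin 3), v)) f) = f := by
    rw [thetaMap, aeval_rename]
    have hcomp : ((fun q : Fin 3 × Fin N =>
        if q.1 = 0 then X q.2
        else if q.1 = 1 then (if X q.2 ∈ p then 0 else X q.2)
        else (if X q.2 ∈ p then X q.2 else 0)) ∘ (fun v : Fin N => ((0 : Fin 3), v))) =
        (X : Fin N → MvPolynomial (Fin N) F) := by
      funext v; simp
    rw [hcomp, aeval_X_left_apply]
  have hmem := Ideal.mem_map_of_mem (thetaMap p) hf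
  rw [hfeq] at hmem
  rw [Ideal.map_sup, Ideal.map_sup] at hmem
  have h1 : Ideal.map (thetaMap p)
      (Ideal.map (rename (fun v : Fin N => ((1 : Fin 3), v)) : _ →ₐ[F] _)
        (edgeIdeal F N G)) ≤ p ^ 2 := by
    rw [Ideal.map_le_iff_le_comap, Ideal.map_le_iff_le_comap, edgeIdeal, Ideal.span_le]
    rintro g ⟨i, j, hij, rfl⟩
    simp only [Set.mem_setOf_eq, SetLike.mem_coe, Ideal.mem_comap, map_mul, rename_X]
    rw [thetaMap_X1, thetaMap_X1]
    rcases hprime.mem_or_mem (hIle (X_mul_X_mem_edgeIdeal hij)) with h | h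
    · rw [if_pos h, zero_mul]; exact zero_mem _
    · rw [if_pos h, mul_zero]; exact zero_mem _
  have h2 : Ideal.map (thetaMap p)
      (Ideal.map (rename (fun v : Fin N => ((2 : Fin 3), v)) : _ →ₐ[F] _)
        (edgeIdeal F N G)) ≤ p ^ 2 := by
    rw [Ideal.map_le_iff_le_comap, Ideal.map_le_iff_le_comap, edgeIdeal, Ideal.span_le]
    rintro g ⟨i, j, hij, rfl⟩
    simp only [Set.mem_setOf_eq, SetLike.mem_coe, Ideal.mem_comap, map_mul, rename_X]
    rw [thetaMap_X2, thetaMap_X2]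
    by_cases hi : X i ∈ p
    · by_cases hj : X j ∈ p
      · rw [if_pos hi, if_pos hj, pow_two]; exact Ideal.mul_mem_mul hi hj
      · rw [if_neg hj, mul_zero]; exact zero_mem _
    · rw [if_neg hi, zero_mul]; exact zero_mem _
  have h3 : Ideal.map (thetaMap p)
      (Ideal.span {f : MvPolynomial (Fin 3 × Fin N) F |
        ∃ i : Fin N, f = X (0, i) - X (1, i) - X (2, i)}) ≤ p ^ 2 := by
    rw [Ideal.map_le_iff_le_comap, Ideal.span_le]
    rintro g ⟨i, rfl⟩
    simp only [Set.mem_setOf_eq, SetLike.mem_coe, Ideal.mem_comap, map_sub]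
    rw [thetaMap_X0, thetaMap_X1, thetaMap_X2]
    by_cases hi : X i ∈ p
    · rw [if_pos hi, if_pos hi, sub_zero, sub_self]; exact zero_mem _
    · rw [if_neg hi, if_neg hi, sub_self, sub_zero]; exact zero_mem _
  exact sup_le (sup_le h1 h2) h3 hmem

lemma secant_le_symbolicSquare :
    secantIdeal2 F N (edgeIdeal F N G) ≤ symbolicSquare F N (edgeIdeal F N G) := by
  rw [symbolicSquare]
  exact le_iInf₂ fun p hp => secant_le_sq_prime hp.1.1 hp.1.2

lemma tri_mem_secant {i j k : Fin N} (h1 : G.Adj i j) (h2 : G.Adj j k) (h3 : G.Adj k i) :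
    X i * X j * X k ∈ secantIdeal2 F N (edgeIdeal F N G) := by
  rw [secantIdeal2, Ideal.mem_comap, map_mul, map_mul, rename_X, rename_X, rename_X]
  set r1 : MvPolynomial (Fin N) F →ₐ[F] MvPolynomial (Fin 3 × Fin N) F :=
    rename (fun v : Fin N => ((1 : Fin 3), v)) with hr1
  set r2 : MvPolynomial (Fin N) F →ₐ[F] MvPolynomial (Fin 3 × Fin N) F :=
    rename (fun v : Fin N => ((2 : Fin 3), v)) with hr2
  set J := Ideal.map r1 (edgeIdeal F N G) ⊔ Ideal.map r2 (edgeIdeal F N G) ⊔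
    Ideal.span {f : MvPolynomial (Fin 3 × Fin N) F |
      ∃ i : Fin N, f = X (0, i) - X (1, i) - X (2, i)} with hJ
  have hD : ∀ v : Fin N,
      (X ((0 : Fin 3), v) - X ((1 : Fin 3), v) - X ((2 : Fin 3), v) :
        MvPolynomial (Fin 3 × Fin N) F) ∈ J := by
    intro v
    exact le_sup_right (α := Ideal (MvPolynomial (Fin 3 × Fin N) F))
      (Ideal.subset_span ⟨v, rfl⟩)
  have hE1 : ∀ a b : Fin N, G.Adj a b →
      (X ((1 : Fin 3), a) * X ((1 : Fin 3), b) : MvPolynomial (Fin 3 × Fin N) F) ∈ J := by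
    intro a b hab
    refine le_sup_left (α := Ideal (MvPolynomial (Fin 3 × Fin N) F))
      (le_sup_left (α := Ideal (MvPolynomial (Fin 3 × Fin N) F)) ?_)
    have := Ideal.mem_map_of_mem r1 (X_mul_X_mem_edgeIdeal hab)
    rwa [map_mul, hr1, rename_X, rename_X] at this
  have hE2 : ∀ a b : Fin N, G.Adj a b →
      (X ((2 : Fin 3), a) * X ((2 : Fin 3), b) : MvPolynomial (Fin 3 × Fin N) F) ∈ J := by
    intro a b hab
    refine le_sup_left (α := Ideal (MvPolynomial (Fin 3 × Fin N) F))
      (le_sup_right (α := Ideal (MvPolynomial (Fin 3 × Fin N) F)) ?_)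
    have := Ideal.mem_map_of_mem r2 (X_mul_X_mem_edgeIdeal hab)
    rwa [map_mul, hr2, rename_X, rename_X] at this
  have key : (X ((0 : Fin 3), i) * X ((0 : Fin 3), j) * X ((0 : Fin 3), k) :
      MvPolynomial (Fin 3 × Fin N) F) =
      (X (0, i) - X (1, i) - X (2, i)) * (X (0, j) * X (0, k))
      + (X (1, i) + X (2, i)) * ((X (0, j) - X (1, j) - X (2, j)) * X (0, k))
      + (X (1, i) + X (2, i)) * ((X (1, j) + X (2, j)) * (X (0, k) - X (1, k) - X (2, k)))
      + (X (1, k) + X (2, k)) * (X ((1 : Fin 3), i) * X ((1 : Fin 3), j))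
      + (X (1, k) + X (2, k)) * (X ((2 : Fin 3), i) * X ((2 : Fin 3), j))
      + X (2, j) * (X ((1 : Fin 3), i) * X ((1 : Fin 3), k))
      + X (1, i) * (X ((2 : Fin 3), j) * X ((2 : Fin 3), k))
      + X (2, i) * (X ((1 : Fin 3), j) * X ((1 : Fin 3), k))
      + X (1, j) * (X ((2 : Fin 3), i) * X ((2 : Fin 3), k)) := by
    ring
  rw [key]
  refine Ideal.add_mem _ (Ideal.add_mem _ (Ideal.add_mem _ (Ideal.add_mem _ (Ideal.add_mem _
    (Ideal.add_mem _ (Ideal.add_mem _ (Ideal.add_mem _ ?_ ?_) ?_) ?_) ?_) ?_) ?_) ?_) ?_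
  · exact Ideal.mul_mem_right _ _ (hD i)
  · exact Ideal.mul_mem_left _ _ (Ideal.mul_mem_right _ _ (hD j))
  · exact Ideal.mul_mem_left _ _ (Ideal.mul_mem_left _ _ (hD k))
  · exact Ideal.mul_mem_left _ _ (hE1 i j h1)
  · exact Ideal.mul_mem_left _ _ (hE2 i j h1)
  · exact Ideal.mul_mem_left _ _ (hE1 i k h3.symm)
  · exact Ideal.mul_mem_left _ _ (hE2 j k h2)
  · exact Ideal.mul_mem_left _ _ (hE1 j k h2)
  · exact Ideal.mul_mem_left _ _ (hE2 i k h3.symm)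

lemma edgeIdeal_sq_le_symbolicSquare :
    edgeIdeal F N G ^ 2 ≤ symbolicSquare F N (edgeIdeal F N G) := by
  rw [symbolicSquare]
  exact le_iInf₂ fun p hp => Ideal.pow_right_mono hp.1.2 2

end Aux

/-- For an edge ideal, `I(G)^{(2)} = I(G)² + I(G)^{2*}`; in particular it is
generated by the triangle monomials `xᵢxⱼx_k` and the monomials `xᵢxⱼx_kx_l`
coming from pairs of edges. -/
theorem symbolicSquare_edgeIdeal (n : ℕ) (G : SimpleGraph (Fin n)) :
    symbolicSquare K n (edgeIdeal K n G) =
      edgeIdeal K n G ^ 2 + secantIdeal2 K n (edgeIdeal K n G) ∧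
    symbolicSquare K n (edgeIdeal K n G) =
      Ideal.span ({f | ∃ i j k : Fin n,
          G.Adj i j ∧ G.Adj j k ∧ G.Adj k i ∧ f = X i * X j * X k} ∪
        {f | ∃ i j k l : Fin n,
          G.Adj i j ∧ G.Adj k l ∧ f = X i * X j * X k * X l}) := by
  have h2 : symbolicSquare K n (edgeIdeal K n G) =
      Ideal.span ({f | ∃ i j k : Fin n,
          G.Adj i j ∧ G.Adj j k ∧ G.Adj k i ∧ f = X i * X j * X k} ∪
        {f | ∃ i j k l : Fin n,
          G.Adj i j ∧ G.Adj k l ∧ f = X i * X j * X k * X l}) := by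
    refine le_antisymm ?_ triPair_le_symbolicSquare
    rw [triPair_span_eq]
    exact symbolicSquare_le_triPair
  refine ⟨le_antisymm ?_ ?_, h2⟩
  · rw [h2, Ideal.span_le]
    rintro f (⟨i, j, k, hij, hjk, hki, rfl⟩ | ⟨i, j, k, l, hij, hkl, rfl⟩)
    · exact Submodule.mem_sup_right (tri_mem_secant hij hjk hki)
    · refine Submodule.mem_sup_left ?_
      have e : (X i * X j * X k * X l : MvPolynomial (Fin n) K) =
          (X i * X j) * (X k * X l) := by ring
      rw [e, pow_two]
      exact Ideal.mul_mem_mul (X_mul_X_mem_edgeIdeal hij) (X_mul_X_mem_edgeIdeal hkl)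
  · rw [Submodule.add_eq_sup]
    exact sup_le edgeIdeal_sq_le_symbolicSquare secant_le_symbolicSquare
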